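/- Let (f_n)_{n≥0} be elements of a normed ring with ‖f_n‖ ≤ n! for all n ≥ 0. Define A_1 = f_0 and A_{n+1} = Y_n(A_1,...,A_n; f_1,...,f_n). Then ‖A_n‖ ≤ (-1)^{n+1} 2^n \binom{1/2}{n} n! for all n ≥ 1, and for 0 ≤ t < 1/2, \sum_{n≥1} ‖A_n‖ t^n/n! ≤ 1 - \sqrt{1-2t}. -/

import Mathlib

open Finset

/-- Partial Bell polynomials `B_{n,k}(b₁,…)`, via the standard recurrence
`B_{n+1,k+1} = ∑_{i=0}^{n} C(n,i) b_{i+1} B_{n-i,k}`. -/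
noncomputable def partialBell {R : Type*} [Ring R] : ℕ → ℕ → (ℕ → R) → R
  | 0, 0, _ => 1
  | _ + 1, 0, _ => 0
  | 0, _ + 1, _ => 0
  | n + 1, k + 1, b =>
      ∑ i ∈ Finset.range (n + 1), (n.choose i : R) * b (i + 1) * partialBell (n - i) k b
  termination_by n k _ => k

/-- The `n`-th (complete) Bell polynomial `Y_n(b₁,…,b_n; a₁,…,a_n) = ∑_{k=1}^n B_{n,k} a_k`. -/
noncomputable def bellY {R : Type*} [Ring R] (n : ℕ) (b a : ℕ → R) : R :=
  ∑ k ∈ Finset.Icc 1 n, partialBell n k b * a k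

/-- The autonomous operator: `A₁ = a₀`, `A_{n+1} = Y_n(A₁,…,A_n; a₁,…,a_n)`. -/
noncomputable def autoA {R : Type*} [Ring R] (a : ℕ → R) : ℕ → R
  | 0 => 0
  | 1 => a 0
  | n + 2 => bellY (n + 1) (fun k => if h : k < n + 2 then autoA a k else 0) a
  termination_by n => n

/-- Generalized binomial coefficient `x(x-1)⋯(x-n+1)/n!`. -/
noncomputable def genChoose (x : ℝ) (n : ℕ) : ℝ :=
  (∏ k ∈ Finset.range n, (x - k)) / n.factorial

/-- Rising factorial (Pochhammer symbol) `(x)ₙ = x(x+1)⋯(x+n-1)`. -/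
noncomputable def risingFac (x : ℝ) (n : ℕ) : ℝ :=
  ∏ k ∈ Finset.range n, (x + k)

noncomputable def myP (n : ℕ) (j : ℝ) : ℝ := ∏ i ∈ Finset.range n, (j + 1 + 2 * i)

lemma myP_zero (j : ℝ) : myP 0 j = 1 := by simp [myP]

lemma myP_succ (n : ℕ) (j : ℝ) : myP (n+1) j = myP n j * (j + 1 + 2 * n) := by
  rw [myP, Finset.prod_range_succ]; rfl

lemma myP_succ' (n : ℕ) (j : ℝ) : myP (n+1) j = (j+1) * myP n (j+2) := by
  rw [myP, Finset.prod_range_succ']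
  have h0 : j + 1 + 2*((0:ℕ):ℝ) = j+1 := by norm_num
  rw [h0, mul_comm]
  congr 1
  rw [myP]; apply Finset.prod_congr rfl; intro i _; push_cast; ring

lemma myP_nonneg (n : ℕ) {j : ℝ} (hj : 0 ≤ j) : 0 ≤ myP n j := by
  apply Finset.prod_nonneg; intro i _; positivity

lemma pascal_split (n : ℕ) (g : ℕ → ℝ) :
    ∑ i ∈ Finset.range (n+2), ((n+1).choose i : ℝ) * g i =
    ∑ i ∈ Finset.range (n+1), (n.choose i : ℝ) * g i +
    ∑ i ∈ Finset.range (n+1), (n.choose i : ℝ) * g (i+1) := by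
  rw [Finset.sum_range_succ' (fun i => ((n+1).choose i : ℝ) * g i) (n+1)]
  have e1 : ∑ i ∈ Finset.range (n+1), ((n+1).choose (i+1) : ℝ) * g (i+1) =
      ∑ i ∈ Finset.range (n+1), (n.choose i : ℝ) * g (i+1) +
      ∑ i ∈ Finset.range (n+1), (n.choose (i+1) : ℝ) * g (i+1) := by
    rw [← Finset.sum_add_distrib]
    apply Finset.sum_congr rfl; intro i _
    rw [Nat.choose_succ_succ]; push_cast; ring
  have e2 : ∑ i ∈ Finset.range (n+2), (n.choose i : ℝ) * g i =
      ∑ i ∈ Finset.range (n+1), (n.choose (i+1) : ℝ) * g (i+1) + (n.choose 0 : ℝ) * g 0 :=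
    Finset.sum_range_succ' (fun i => (n.choose i : ℝ) * g i) (n+1)
  have e3 : ∑ i ∈ Finset.range (n+2), (n.choose i : ℝ) * g i =
      ∑ i ∈ Finset.range (n+1), (n.choose i : ℝ) * g i := by
    rw [Finset.sum_range_succ, Nat.choose_succ_self]; simp
  simp only [Nat.choose_zero_right, Nat.cast_one, one_mul] at *
  linarith

lemma vander (n : ℕ) : ∀ (a b : ℝ),
    ∑ i ∈ Finset.range (n+1), (n.choose i : ℝ) * (myP i a * myP (n-i) b) = myP n (a+b+1) := by
  induction n with
  | zero => intro a b; simp [myP]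
  | succ n ih =>
    intro a b
    rw [pascal_split n (fun i => myP i a * myP (n+1-i) b)]
    rw [← Finset.sum_add_distrib]
    have key : ∀ i ∈ Finset.range (n+1),
        (n.choose i : ℝ) * (myP i a * myP (n+1-i) b)
          + (n.choose i : ℝ) * (myP (i+1) a * myP (n+1-(i+1)) b)
        = (a+b+2+2*n) * ((n.choose i : ℝ) * (myP i a * myP (n-i) b)) := by
      intro i hi
      have hin : i ≤ n := Nat.lt_succ_iff.mp (Finset.mem_range.mp hi)
      have h1 : n + 1 - i = (n - i) + 1 := by omega
      have h2 : n + 1 - (i+1) = n - i := by omega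
      rw [h1, h2, myP_succ, myP_succ]
      have h3 : ((n - i : ℕ) : ℝ) = (n : ℝ) - i := Nat.cast_sub hin
      rw [h3]; ring
    rw [Finset.sum_congr rfl key, ← Finset.mul_sum, ih, myP_succ]
    ring

lemma partialBell_eq_zero {R : Type*} [Ring R] (b : ℕ → R) :
    ∀ k n, n < k → partialBell n k b = 0 := by
  intro k
  induction k with
  | zero => intro n h; exact absurd h (Nat.not_lt_zero n)
  | succ k ih =>
    intro n h
    match n with
    | 0 => rw [partialBell]
    | m+1 =>
      rw [partialBell]
      apply Finset.sum_eq_zero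
      intro i _
      rw [ih (m - i) (by omega), mul_zero]

lemma partialBell_one {R : Type*} [Ring R] (b : ℕ → R) (n : ℕ) :
    partialBell (n+1) 1 b = b (n+1) := by
  rw [partialBell]
  rw [Finset.sum_eq_single n]
  · have h0 : n - n = 0 := by omega
    rw [h0, partialBell, Nat.choose_self]
    simp
  · intro i hi hne
    have hlt : i < n + 1 := Finset.mem_range.mp hi
    obtain ⟨m, hm⟩ := Nat.exists_eq_succ_of_ne_zero (by omega : n - i ≠ 0)
    rw [hm, partialBell, mul_zero]
  · intro h; exact absurd (Finset.self_mem_range_succ n) h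

lemma partialBell_nonneg (c : ℕ → ℝ) (hc : ∀ m, 1 ≤ m → 0 ≤ c m) :
    ∀ k n, 0 ≤ partialBell n k c := by
  intro k
  induction k with
  | zero =>
    intro n
    match n with
    | 0 => rw [partialBell]; norm_num
    | m+1 => rw [partialBell]
  | succ k ih =>
    intro n
    match n with
    | 0 => rw [partialBell]
    | m+1 =>
      rw [partialBell]
      apply Finset.sum_nonneg
      intro i _
      have h1 := hc (i+1) (by omega)
      have h2 := ih (m - i)
      positivity

lemma norm_partialBell {R : Type*} [NormedRing R] (b : ℕ → R) (c : ℕ → ℝ)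
    (hbc : ∀ m, 1 ≤ m → ‖b m‖ ≤ c m) (hc : ∀ m, 1 ≤ m → 0 ≤ c m) :
    ∀ k, 1 ≤ k → ∀ n, ‖partialBell n k b‖ ≤ partialBell n k c := by
  intro k
  induction k with
  | zero => intro h; exact absurd h (by omega)
  | succ k ih =>
    intro _ n
    match n with
    | 0 =>
      rw [partialBell, partialBell, norm_zero]
    | m+1 =>
      match k with
      | 0 =>
        rw [partialBell_one, partialBell_one]
        exact hbc (m+1) (by omega)
      | k+1 =>
        rw [show partialBell (m+1) (k+1+1) b
            = ∑ i ∈ Finset.range (m + 1), (m.choose i : R) * b (i + 1) * partialBell (m - i) (k+1) b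
          from by rw [partialBell],
          show partialBell (m+1) (k+1+1) c
            = ∑ i ∈ Finset.range (m + 1), (m.choose i : ℝ) * c (i + 1) * partialBell (m - i) (k+1) c
          from by rw [partialBell]]
        refine le_trans (norm_sum_le _ _) (Finset.sum_le_sum ?_)
        intro i _
        calc ‖(m.choose i : R) * b (i+1) * partialBell (m-i) (k+1) b‖
            = ‖(m.choose i) • (b (i+1) * partialBell (m-i) (k+1) b)‖ := by
              rw [nsmul_eq_mul, mul_assoc]
          _ ≤ (m.choose i : ℝ) * ‖b (i+1) * partialBell (m-i) (k+1) b‖ := norm_nsmul_le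
          _ ≤ (m.choose i : ℝ) * (c (i+1) * partialBell (m-i) (k+1) c) := by
              apply mul_le_mul_of_nonneg_left _ (Nat.cast_nonneg _)
              exact le_trans (norm_mul_le _ _)
                (mul_le_mul (hbc _ (by omega)) (ih (by omega) _) (norm_nonneg _) (hc _ (by omega)))
          _ = (m.choose i : ℝ) * c (i+1) * partialBell (m-i) (k+1) c := by ring

lemma risingFac_succ' (x : ℝ) (k : ℕ) : risingFac x (k+1) = x * risingFac (x+1) k := by
  rw [risingFac, Finset.prod_range_succ']
  have h0 : x + ((0:ℕ):ℝ) = x := by norm_num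
  rw [h0, mul_comm]
  congr 1
  rw [risingFac]; apply Finset.prod_congr rfl; intro i _; push_cast; ring

lemma risingFac_one_eq (k : ℕ) : risingFac 1 k = (k.factorial : ℝ) := by
  induction k with
  | zero => simp [risingFac]
  | succ k ih =>
    rw [risingFac, Finset.prod_range_succ, ← risingFac, ih, Nat.factorial_succ]
    push_cast; ring

noncomputable def dseq : ℕ → ℝ := fun m => myP (m-1) 0

lemma dseq_succ (i : ℕ) : dseq (i+1) = myP i 0 := by simp [dseq]

lemma dseq_nonneg : ∀ m, 1 ≤ m → 0 ≤ dseq m := fun m _ => myP_nonneg _ le_rfl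

lemma bell_sum (n : ℕ) : ∀ j : ℝ,
    ∑ k ∈ Finset.range (n+1), partialBell n k dseq * risingFac (j+1) k = myP n j := by
  induction n using Nat.strong_induction_on with
  | _ n ih =>
    match n with
    | 0 =>
      intro j
      rw [Finset.sum_range_one, partialBell, myP_zero]
      simp [risingFac]
    | n+1 =>
      intro j
      rw [Finset.sum_range_succ' (fun k => partialBell (n+1) k dseq * risingFac (j+1) k) (n+1)]
      have h0 : partialBell (n+1) 0 dseq = 0 := by rw [partialBell]
      rw [h0, zero_mul, add_zero]
      have step : ∀ k ∈ Finset.range (n+1),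
          partialBell (n+1) (k+1) dseq * risingFac (j+1) (k+1)
          = ∑ i ∈ Finset.range (n+1),
              (j+1) * ((n.choose i : ℝ) * dseq (i+1) * (partialBell (n-i) k dseq * risingFac (j+1+1) k)) := by
        intro k _
        rw [show partialBell (n+1) (k+1) dseq
            = ∑ i ∈ Finset.range (n + 1), (n.choose i : ℝ) * dseq (i + 1) * partialBell (n - i) k dseq
          from by rw [partialBell], risingFac_succ', Finset.sum_mul]
        apply Finset.sum_congr rfl; intro i _; ring
      rw [Finset.sum_congr rfl step, Finset.sum_comm]
      have inner : ∀ i ∈ Finset.range (n+1),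
          ∑ k ∈ Finset.range (n+1),
            (j+1) * ((n.choose i : ℝ) * dseq (i+1) * (partialBell (n-i) k dseq * risingFac (j+1+1) k))
          = (j+1) * ((n.choose i : ℝ) * (myP i 0 * myP (n-i) (j+1))) := by
        intro i hi
        have hii : i ≤ n := Nat.lt_succ_iff.mp (Finset.mem_range.mp hi)
        have htr : ∑ k ∈ Finset.range (n+1), partialBell (n-i) k dseq * risingFac (j+1+1) k
            = ∑ k ∈ Finset.range (n-i+1), partialBell (n-i) k dseq * risingFac (j+1+1) k := by
          symm
          apply Finset.sum_subset (Finset.range_subset_range.mpr (by omega))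
          intro k _ hk2
          rw [partialBell_eq_zero dseq k (n-i) (by simp at hk2 ⊢; omega), zero_mul]
        calc ∑ k ∈ Finset.range (n+1),
              (j+1) * ((n.choose i : ℝ) * dseq (i+1) * (partialBell (n-i) k dseq * risingFac (j+1+1) k))
            = (j+1) * ((n.choose i : ℝ) * dseq (i+1)
                * ∑ k ∈ Finset.range (n+1), partialBell (n-i) k dseq * risingFac (j+1+1) k) := by
              rw [Finset.mul_sum, Finset.mul_sum]
          _ = (j+1) * ((n.choose i : ℝ) * (myP i 0 * myP (n-i) (j+1))) := by
              rw [htr, ih (n-i) (by omega) (j+1), dseq_succ]; ring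
      rw [Finset.sum_congr rfl inner, ← Finset.mul_sum, vander, myP_succ']
      have he : (0:ℝ)+(j+1)+1 = j+2 := by ring
      rw [he]

lemma normA_le {R : Type*} [NormedRing R] (f : ℕ → R) (hf : ∀ n : ℕ, ‖f n‖ ≤ n.factorial) :
    ∀ n, 1 ≤ n → ‖autoA f n‖ ≤ myP (n-1) 0 := by
  intro n
  induction n using Nat.strong_induction_on with
  | _ n ih =>
    match n with
    | 0 => intro h; exact absurd h (by omega)
    | 1 =>
      intro _
      rw [autoA]
      have := hf 0
      simpa [myP] using this
    | m+2 =>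
      intro _
      rw [autoA, bellY]
      refine le_trans (norm_sum_le _ _) ?_
      have hA' : ∀ jj, 1 ≤ jj →
          ‖(fun k => if _ : k < m+2 then autoA f k else 0) jj‖ ≤ dseq jj := by
        intro jj hjj
        by_cases hlt : jj < m + 2
        · simp only [hlt, dif_pos]
          exact ih jj hlt hjj
        · simp only [hlt, dif_neg, not_false_iff, norm_zero]
          exact dseq_nonneg jj hjj
      have hterm : ∀ k ∈ Finset.Icc 1 (m+1),
          ‖partialBell (m+1) k (fun k => if _ : k < m+2 then autoA f k else 0) * f k‖
            ≤ partialBell (m+1) k dseq * (k.factorial : ℝ) := by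
        intro k hk
        have hk1 : 1 ≤ k := (Finset.mem_Icc.mp hk).1
        refine le_trans (norm_mul_le _ _) ?_
        exact mul_le_mul (norm_partialBell _ dseq hA' dseq_nonneg k hk1 (m+1)) (hf k)
          (norm_nonneg _) (partialBell_nonneg dseq dseq_nonneg k (m+1))
      refine le_trans (Finset.sum_le_sum hterm) ?_
      have hbs := bell_sum (m+1) 0
      have h01 : (0:ℝ) + 1 = 1 := by norm_num
      rw [h01] at hbs
      have hsplit : ∑ k ∈ Finset.range (m+2), partialBell (m+1) k dseq * risingFac 1 k
          = ∑ k ∈ Finset.Icc 1 (m+1), partialBell (m+1) k dseq * (k.factorial : ℝ) := by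
        rw [Finset.sum_range_succ' (fun k => partialBell (m+1) k dseq * risingFac 1 k) (m+1)]
        have h0 : partialBell (m+1) 0 dseq = 0 := by rw [partialBell]
        rw [h0, zero_mul, add_zero]
        rw [← Finset.Ico_add_one_right_eq_Icc, Finset.sum_Ico_eq_sum_range]
        apply Finset.sum_congr (by norm_num)
        intro i _
        rw [risingFac_one_eq, Nat.add_comm 1 i]
      rw [← hsplit, hbs]
      have : (m+2) - 1 = m + 1 := by omega
      rw [this]

lemma closedForm : ∀ m : ℕ,
    ((-1:ℝ))^m * 2^(m+1) * ∏ k ∈ Finset.range (m+1), ((1:ℝ)/2 - k) = myP m 0 := by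
  intro m
  induction m with
  | zero => norm_num [myP]
  | succ m ih =>
    rw [Finset.prod_range_succ, myP_succ, ← ih]
    push_cast; ring

lemma myP0_eq (n : ℕ) : myP n 0 * 2^n = (Nat.centralBinom n : ℝ) * n.factorial := by
  induction n with
  | zero => simp [myP, Nat.centralBinom_zero]
  | succ n ih =>
    have h1 : ((n:ℝ)+1) * (Nat.centralBinom (n+1) : ℝ) = 2*(2*(n:ℝ)+1) * Nat.centralBinom n := by
      exact_mod_cast Nat.succ_mul_centralBinom_succ n
    rw [myP_succ, Nat.factorial_succ]
    push_cast
    have hne : ((n:ℝ)+1) ≠ 0 := by positivity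
    apply mul_left_cancel₀ hne
    calc ((n:ℝ)+1) * (myP n 0 * ((0:ℝ) + 1 + 2*n) * 2^(n+1))
        = (((n:ℝ)+1) * (Nat.centralBinom (n+1) : ℝ)) * (((n:ℝ)+1) * n.factorial) := by
          rw [h1]; linear_combination (2*(2*(n:ℝ)+1)*((n:ℝ)+1)) * ih
      _ = ((n:ℝ)+1) * ((Nat.centralBinom (n+1) : ℝ) * (((n:ℝ)+1) * n.factorial)) := by ring

lemma catalan_le_four_pow (n : ℕ) : (catalan n : ℝ) ≤ 4^n := by
  have h1 : catalan n ≤ n.centralBinom := by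
    calc catalan n ≤ (n+1) * catalan n := Nat.le_mul_of_pos_left _ (by omega)
      _ = n.centralBinom := succ_mul_catalan_eq_centralBinom n
  have h2 : n.centralBinom ≤ 4^n := by
    rw [Nat.centralBinom]
    calc (2*n).choose n ≤ ∑ m ∈ Finset.range (2*n+1), (2*n).choose m :=
          Finset.single_le_sum (fun i _ => Nat.zero_le _) (Finset.mem_range.mpr (by omega))
      _ = 2^(2*n) := Nat.sum_range_choose _
      _ = 4^n := by rw [pow_mul]; norm_num
  calc (catalan n : ℝ) ≤ (n.centralBinom : ℝ) := by exact_mod_cast h1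
    _ ≤ 4^n := by exact_mod_cast h2

lemma cat4_sum (N : ℕ) : ∑ n ∈ Finset.range N, (catalan n : ℝ)/4^n
    = 2 - 2 * (Nat.centralBinom N : ℝ)/4^N := by
  induction N with
  | zero => simp [Nat.centralBinom_zero]
  | succ N ih =>
    rw [Finset.sum_range_succ, ih]
    have h1 : ((N:ℝ)+1) * (Nat.centralBinom (N+1) : ℝ) = 2*(2*(N:ℝ)+1) * Nat.centralBinom N := by
      exact_mod_cast Nat.succ_mul_centralBinom_succ N
    have h2 : ((N:ℝ)+1) * (catalan N : ℝ) = Nat.centralBinom N := by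
      exact_mod_cast succ_mul_catalan_eq_centralBinom N
    have hne : ((N:ℝ)+1) ≠ 0 := by positivity
    have e2 : (catalan N : ℝ) = (Nat.centralBinom N : ℝ)/((N:ℝ)+1) := by
      field_simp; linarith [h2]
    have e1 : (Nat.centralBinom (N+1) : ℝ) = 2*(2*(N:ℝ)+1) * Nat.centralBinom N / ((N:ℝ)+1) := by
      field_simp; linarith [h1]
    rw [e2, e1, pow_succ]
    field_simp
    ring

/-- If `‖fₙ‖ ≤ n!`, then `‖Aₙ‖ ≤ (-1)^{n+1} 2ⁿ C(1/2,n) n!`, and for `0 ≤ t < 1/2`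
the series `∑_{n≥1} ‖Aₙ‖ tⁿ/n!` is bounded by `1 - √(1-2t)`. -/
theorem autoA_bound_factorial {R : Type*} [NormedRing R]
    (f : ℕ → R) (hf : ∀ n : ℕ, ‖f n‖ ≤ n.factorial) :
    (∀ n : ℕ, 1 ≤ n →
      ‖autoA f n‖ ≤ (-1) ^ (n + 1) * 2 ^ n * genChoose (1 / 2) n * n.factorial) ∧
    (∀ t : ℝ, 0 ≤ t → t < 1 / 2 →
      ∑' n : ℕ, ‖autoA f (n + 1)‖ * t ^ (n + 1) / (n + 1).factorial ≤
        1 - Real.sqrt (1 - 2 * t)) := by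
  constructor
  · intro n hn
    obtain ⟨m, rfl⟩ : ∃ m, n = m + 1 := ⟨n - 1, by omega⟩
    have h := normA_le f hf (m+1) (by omega)
    have hred : (m+1) - 1 = m := by omega
    rw [hred] at h
    refine le_trans h (le_of_eq ?_)
    rw [← closedForm m, genChoose]
    have hfac : (((m+1).factorial : ℝ)) ≠ 0 := by positivity
    field_simp
    ring
  · intro t ht ht2
    set v : ℕ → ℝ := fun n => (catalan n : ℝ)/2^n * t^(n+1) with hvdef
    have hv0 : ∀ n, 0 ≤ v n := by
      intro n; simp only [hvdef]; positivity
    have hvle : ∀ n, v n ≤ t * (2*t)^n := by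
      intro n
      have h4 : (catalan n : ℝ) ≤ 4^n := catalan_le_four_pow n
      simp only [hvdef]
      calc (catalan n : ℝ)/2^n * t^(n+1) ≤ (4:ℝ)^n/2^n * t^(n+1) := by gcongr
        _ = t * (2*t)^n := by
            rw [show (4:ℝ)^n = 2^n * 2^n from by rw [← mul_pow]; norm_num, mul_pow, pow_succ]
            have h2n : ((2:ℝ)^n) ≠ 0 := by positivity
            field_simp
    have hv : Summable v := by
      apply Summable.of_nonneg_of_le hv0 hvle
      exact (summable_geometric_of_lt_one (by positivity) (by linarith)).mul_left t
    set L : ℝ := ∑' n, v n with hL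
    have hLnonneg : 0 ≤ L := tsum_nonneg hv0
    have hL1 : L ≤ 1 := by
      apply Real.tsum_le_of_sum_range_le hv0
      intro N
      have hstep : ∀ n ∈ Finset.range N, v n ≤ (catalan n : ℝ)/4^n * (1/2) := by
        intro n _
        have hpow : t^(n+1) ≤ (1/2:ℝ)^(n+1) := pow_le_pow_left₀ ht (by linarith) _
        simp only [hvdef]
        calc (catalan n : ℝ)/2^n * t^(n+1) ≤ (catalan n : ℝ)/2^n * (1/2)^(n+1) := by
              apply mul_le_mul_of_nonneg_left hpow (by positivity)
          _ = (catalan n : ℝ)/4^n * (1/2) := by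
              rw [show (4:ℝ)^n = 2^n * 2^n from by rw [← mul_pow]; norm_num,
                div_pow, one_pow, pow_succ]
              ring
      calc ∑ n ∈ Finset.range N, v n
          ≤ ∑ n ∈ Finset.range N, (catalan n : ℝ)/4^n * (1/2) := Finset.sum_le_sum hstep
        _ = (2 - 2*(Nat.centralBinom N : ℝ)/4^N) * (1/2) := by rw [← Finset.sum_mul, cat4_sum]
        _ = 1 - (Nat.centralBinom N : ℝ)/4^N := by ring
        _ ≤ 1 := by
            have hcb : (0:ℝ) ≤ (Nat.centralBinom N : ℝ)/4^N := by positivity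
            linarith
    have hvabs : Summable (fun n => ‖v n‖) := by
      simpa only [Real.norm_eq_abs] using hv.abs
    have hA : ∀ m : ℕ, ∑ kl ∈ Finset.HasAntidiagonal.antidiagonal m, v kl.1 * v kl.2 = 2 * v (m+1) := by
      intro m
      have hterm : ∀ kl ∈ Finset.HasAntidiagonal.antidiagonal m,
          v kl.1 * v kl.2 = ((catalan kl.1 * catalan kl.2 : ℕ) : ℝ) * (t^(m+2) / 2^m) := by
        intro kl hkl
        have hsum : kl.1 + kl.2 = m := Finset.HasAntidiagonal.mem_antidiagonal.mp hkl
        simp only [hvdef]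
        rw [← hsum]
        push_cast
        rw [pow_add, pow_add, pow_succ, pow_succ, pow_succ]
        have h1 : ((2:ℝ)^kl.1) ≠ 0 := by positivity
        have h2 : ((2:ℝ)^kl.2) ≠ 0 := by positivity
        field_simp
        ring
      rw [Finset.sum_congr rfl hterm, ← Finset.sum_mul]
      have hcat : ∑ kl ∈ Finset.HasAntidiagonal.antidiagonal m, ((catalan kl.1 * catalan kl.2 : ℕ) : ℝ)
          = ((catalan (m+1) : ℕ) : ℝ) := by
        rw [← Nat.cast_sum, ← catalan_succ']
      rw [hcat]
      simp only [hvdef]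
      rw [pow_succ]
      have h2m : ((2:ℝ)^m) ≠ 0 := by positivity
      field_simp
      ring
    have hquad : L * L = 2*L - 2*t := by
      have hshift := Summable.tsum_eq_zero_add hv
      have hv0t : v 0 = t := by simp [hvdef]
      calc L * L = ∑' m, ∑ kl ∈ Finset.HasAntidiagonal.antidiagonal m, v kl.1 * v kl.2 :=
            tsum_mul_tsum_eq_tsum_sum_antidiagonal_of_summable_norm hvabs hvabs
        _ = ∑' m, 2 * v (m+1) := tsum_congr hA
        _ = 2 * ∑' m, v (m+1) := tsum_mul_left
        _ = 2*L - 2*t := by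
            have : ∑' m, v (m+1) = L - v 0 := by rw [hL]; linarith [hshift]
            rw [this, hv0t]; ring
    have hsq : Real.sqrt (1 - 2*t) = 1 - L := by
      have h1L : (1 - L)^2 = 1 - 2*t := by linear_combination hquad
      rw [← h1L, Real.sqrt_sq (by linarith)]
    rw [hsq, show (1:ℝ) - (1 - L) = L from by ring]
    have hmyPc : ∀ n : ℕ, myP n 0 = (catalan n : ℝ)/2^n * ((n+1).factorial : ℝ) := by
      intro n
      have h1 := myP0_eq n
      have h2 : ((n:ℝ)+1) * (catalan n:ℝ) = (Nat.centralBinom n : ℝ) := by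
        exact_mod_cast succ_mul_catalan_eq_centralBinom n
      have hfac : (((n+1).factorial : ℕ) : ℝ) = ((n:ℝ)+1) * (n.factorial : ℝ) := by
        exact_mod_cast Nat.factorial_succ n
      have h2n : ((2:ℝ)^n) ≠ 0 := by positivity
      field_simp
      rw [h1, hfac]
      linear_combination (-(n.factorial : ℝ)) * h2
    have huv : ∀ n : ℕ, ‖autoA f (n+1)‖ * t^(n+1) / ((n+1).factorial : ℝ) ≤ v n := by
      intro n
      have h := normA_le f hf (n+1) (by omega)
      simp only [Nat.add_sub_cancel] at h
      have hfp : (0:ℝ) < ((n+1).factorial : ℝ) := by positivity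
      calc ‖autoA f (n+1)‖ * t^(n+1) / ((n+1).factorial : ℝ)
          ≤ myP n 0 * t^(n+1) / ((n+1).factorial : ℝ) := by gcongr
        _ = v n := by
            rw [hmyPc n]
            simp only [hvdef]
            field_simp
    have hu0 : ∀ n : ℕ, 0 ≤ ‖autoA f (n+1)‖ * t^(n+1) / ((n+1).factorial : ℝ) := by
      intro n; positivity
    exact Summable.tsum_le_tsum huv (Summable.of_nonneg_of_le hu0 huv hv) hv
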